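/- Let γ : [0,1] → ℂ be continuously differentiable with image disjoint from (−∞,0], and let D : ℂ → ℂ be continuous. Define F : T → ℂ by F(z) := ∫₀¹ D(γ(t)) · γ′(t) · W_{γ(t)}(z) dt. Then for every z ∈ T the inner integral defining W_{γ(t)}(z) is absolutely convergent for each t ∈ [0,1], the outer integrand is integrable on [0,1], and F is holomorphic on T (ℂ-differentiable as a function of the four complex variables at every point of the open set T). -/

import Mathlib

open MeasureTheory Complex

/-- Principal branch of `√(‖k‖² + ζ)` for `k ∈ ℝ³`. -/
noncomputable def Esqrt (ζ : ℂ) (k : EuclideanSpace ℝ (Fin 3)) : ℂ :=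
  ((‖k‖ ^ 2 : ℝ) + ζ) ^ ((1 : ℂ) / 2)

/-- The forward tube `T = {z ∈ ℂ⁴ : −Im z₀ > √((Im z₁)² + (Im z₂)² + (Im z₃)²)}`. -/
def ForwardTube : Set (Fin 4 → ℂ) :=
  {z | Real.sqrt ((z 1).im ^ 2 + (z 2).im ^ 2 + (z 3).im ^ 2) < -(z 0).im}

/-- The integrand of the holomorphic Wightman function `W_ζ` of a simple pole. -/
noncomputable def WIntegrand (ζ : ℂ) (z : Fin 4 → ℂ) (k : EuclideanSpace ℝ (Fin 3)) : ℂ :=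
  (2 * Esqrt ζ k)⁻¹ *
    Complex.exp (-Complex.I * Esqrt ζ k * z 0 +
      Complex.I * ((k 0 : ℂ) * z 1 + (k 1 : ℂ) * z 2 + (k 2 : ℂ) * z 3))

/-- The holomorphic Wightman function `W_ζ(z)` of a simple (possibly complex-mass) pole. -/
noncomputable def Wpole (ζ : ℂ) (z : Fin 4 → ℂ) : ℂ :=
  ((2 * Real.pi : ℝ) : ℂ)⁻¹ ^ 3 * ∫ k : EuclideanSpace ℝ (Fin 3), WIntegrand ζ z k

lemma Esqrt_sq (ζ : ℂ) (k : EuclideanSpace ℝ (Fin 3)) :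
    Esqrt ζ k ^ 2 = ((‖k‖ ^ 2 : ℝ) + ζ) := by
  have : (1:ℂ)/2 = ((2:ℕ):ℂ)⁻¹ := by norm_num
  rw [Esqrt, this, cpow_nat_inv_pow _ (by norm_num)]

lemma Esqrt_re_nonneg (ζ : ℂ) (k : EuclideanSpace ℝ (Fin 3)) : 0 ≤ (Esqrt ζ k).re := by
  rw [Esqrt]
  rcases eq_or_ne ((‖k‖ ^ 2 : ℝ) + ζ) 0 with h | h
  · rw [h, Complex.zero_cpow (by norm_num : (1:ℂ)/2 ≠ 0)]; simp
  · rw [Complex.cpow_def_of_ne_zero h, Complex.exp_re]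
    have harg : |(Complex.log ((‖k‖ ^ 2 : ℝ) + ζ) * ((1:ℂ)/2)).im| ≤ Real.pi / 2 := by
      have : (Complex.log ((‖k‖ ^ 2 : ℝ) + ζ) * ((1:ℂ)/2)).im
          = Complex.arg ((‖k‖ ^ 2 : ℝ) + ζ) / 2 := by
        simp [Complex.mul_im, Complex.log_im, Complex.log_re]
        ring
      rw [this, abs_div]
      have := Complex.abs_arg_le_pi ((‖k‖ ^ 2 : ℝ) + ζ)
      rw [_root_.abs_of_nonneg (by norm_num : (0:ℝ) ≤ 2)]
      linarith
    have := Real.cos_nonneg_of_mem_Icc (x := (Complex.log ((‖k‖ ^ 2 : ℝ) + ζ) * ((1:ℂ)/2)).im)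
      ⟨by linarith [abs_le.1 harg |>.1], by linarith [abs_le.1 harg |>.2, Real.pi_pos]⟩
    positivity

lemma Esqrt_sq_facts (ζ : ℂ) (k : EuclideanSpace ℝ (Fin 3)) :
    (Esqrt ζ k).re ^ 2 - (Esqrt ζ k).im ^ 2 = ‖k‖ ^ 2 + ζ.re ∧
    (Esqrt ζ k).re ^ 2 + (Esqrt ζ k).im ^ 2 = ‖(‖k‖ ^ 2 : ℝ) + ζ‖ := by
  have h := Esqrt_sq ζ k
  constructor
  · have := congrArg Complex.re h
    simp [pow_two, Complex.mul_re, Complex.add_re, Complex.ofReal_re] at this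
    linear_combination this
  · have h2 : ‖Esqrt ζ k‖ ^ 2 = ‖(‖k‖ ^ 2 : ℝ) + ζ‖ := by
      rw [← norm_pow, h]
    rw [← h2, Complex.sq_norm, Complex.normSq_apply]; ring

lemma Esqrt_re_ge (ζ : ℂ) (k : EuclideanSpace ℝ (Fin 3)) {M : ℝ} (hM : ‖ζ‖ ≤ M) :
    ‖k‖ - Real.sqrt M ≤ (Esqrt ζ k).re := by
  have h0 : (0:ℝ) ≤ M := le_trans (norm_nonneg _) hM
  obtain ⟨h1, h2⟩ := Esqrt_sq_facts ζ k
  have hre := Esqrt_re_nonneg ζ k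
  have habs : ‖(‖k‖ ^ 2 : ℝ) + ζ‖ ≥ ‖k‖ ^ 2 + ζ.re := by
    have := Complex.re_le_norm ((‖k‖ ^ 2 : ℝ) + ζ)
    simp only [Complex.add_re, Complex.ofReal_re] at this
    exact this
  have hζre : |ζ.re| ≤ M := le_trans (Complex.abs_re_le_norm ζ) hM
  rcases le_or_gt ‖k‖ (Real.sqrt M) with h | h
  · linarith
  · have hsq : Real.sqrt M ^ 2 = M := Real.sq_sqrt h0
    have hknn : (0:ℝ) ≤ ‖k‖ := norm_nonneg k
    have hsn : (0:ℝ) ≤ Real.sqrt M := Real.sqrt_nonneg M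
    nlinarith [abs_le.1 hζre]

lemma Esqrt_im_le (ζ : ℂ) (k : EuclideanSpace ℝ (Fin 3)) {M : ℝ} (hM : ‖ζ‖ ≤ M) :
    |(Esqrt ζ k).im| ≤ Real.sqrt M := by
  have h0 : (0:ℝ) ≤ M := le_trans (norm_nonneg _) hM
  obtain ⟨h1, h2⟩ := Esqrt_sq_facts ζ k
  have habs : ‖(‖k‖ ^ 2 : ℝ) + ζ‖ ≤ ‖k‖ ^ 2 + ‖ζ‖ := by
    calc ‖(‖k‖ ^ 2 : ℝ) + ζ‖ ≤ ‖((‖k‖ ^ 2 : ℝ):ℂ)‖ + ‖ζ‖ :=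
          norm_add_le _ _
      _ = ‖k‖ ^ 2 + ‖ζ‖ := by rw [Complex.norm_real, Real.norm_eq_abs, _root_.abs_of_nonneg (by positivity)]
  have hζre : |ζ.re| ≤ M := le_trans (Complex.abs_re_le_norm ζ) hM
  have hsq : Real.sqrt M ^ 2 = M := Real.sq_sqrt h0
  have hsn : (0:ℝ) ≤ Real.sqrt M := Real.sqrt_nonneg M
  rw [abs_le]
  constructor <;> nlinarith [abs_le.1 hζre, sq_nonneg ((Esqrt ζ k).im + Real.sqrt M),
    sq_nonneg ((Esqrt ζ k).im - Real.sqrt M)]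

lemma Esqrt_abs_le (ζ : ℂ) (k : EuclideanSpace ℝ (Fin 3)) {M : ℝ} (hM : ‖ζ‖ ≤ M) :
    ‖Esqrt ζ k‖ ≤ ‖k‖ + Real.sqrt M := by
  have h0 : (0:ℝ) ≤ M := le_trans (norm_nonneg _) hM
  obtain ⟨h1, h2⟩ := Esqrt_sq_facts ζ k
  have habs : ‖(‖k‖ ^ 2 : ℝ) + ζ‖ ≤ ‖k‖ ^ 2 + M := by
    calc ‖(‖k‖ ^ 2 : ℝ) + ζ‖ ≤ ‖((‖k‖ ^ 2 : ℝ):ℂ)‖ + ‖ζ‖ :=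
          norm_add_le _ _
      _ ≤ ‖k‖ ^ 2 + M := by
          rw [Complex.norm_real, Real.norm_eq_abs, _root_.abs_of_nonneg (by positivity)]; linarith
  have hE : ‖Esqrt ζ k‖ ^ 2 = (Esqrt ζ k).re ^ 2 + (Esqrt ζ k).im ^ 2 := by
    rw [Complex.sq_norm, Complex.normSq_apply]; ring
  have hsq : Real.sqrt M ^ 2 = M := Real.sq_sqrt h0
  have hsn : (0:ℝ) ≤ Real.sqrt M := Real.sqrt_nonneg M
  have hknn : (0:ℝ) ≤ ‖k‖ := norm_nonneg k
  nlinarith [norm_nonneg (Esqrt ζ k)]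

lemma Esqrt_abs_ge (ζ : ℂ) (k : EuclideanSpace ℝ (Fin 3)) {δ : ℝ} (hδ0 : 0 ≤ δ)
    (hδ : δ ≤ max ζ.re |ζ.im|) : Real.sqrt δ ≤ ‖Esqrt ζ k‖ := by
  obtain ⟨h1, h2⟩ := Esqrt_sq_facts ζ k
  have hE : ‖Esqrt ζ k‖ ^ 2 = (Esqrt ζ k).re ^ 2 + (Esqrt ζ k).im ^ 2 := by
    rw [Complex.sq_norm, Complex.normSq_apply]; ring
  have hre : ‖(‖k‖ ^ 2 : ℝ) + ζ‖ ≥ ‖k‖ ^ 2 + ζ.re := by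
    have := Complex.re_le_norm ((‖k‖ ^ 2 : ℝ) + ζ)
    simp only [Complex.add_re, Complex.ofReal_re] at this
    exact this
  have him : ‖(‖k‖ ^ 2 : ℝ) + ζ‖ ≥ |ζ.im| := by
    have := Complex.abs_im_le_norm ((‖k‖ ^ 2 : ℝ) + ζ)
    simp only [Complex.add_im, Complex.ofReal_im, zero_add] at this
    exact this
  have hwge : δ ≤ ‖(‖k‖ ^ 2 : ℝ) + ζ‖ := by
    rcases max_cases ζ.re |ζ.im| with ⟨hm, _⟩ | ⟨hm, _⟩ <;>
      [ (rw [hm] at hδ; nlinarith [sq_nonneg ‖k‖]) ; (rw [hm] at hδ; linarith) ]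
  have hsq : Real.sqrt δ ^ 2 = δ := Real.sq_sqrt hδ0
  have hsn : (0:ℝ) ≤ Real.sqrt δ := Real.sqrt_nonneg δ
  nlinarith [norm_nonneg (Esqrt ζ k)]

lemma Esqrt_ne_zero (ζ : ℂ) (k : EuclideanSpace ℝ (Fin 3))
    (hζ : ∀ x : ℝ, x ≤ 0 → ζ ≠ (x : ℂ)) : Esqrt ζ k ≠ 0 := by
  intro h
  have := Esqrt_sq ζ k
  rw [h] at this
  have hz : ζ = ((-(‖k‖^2) : ℝ) : ℂ) := by
    rw [Complex.ofReal_neg]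
    linear_combination -this
  exact hζ (-(‖k‖^2)) (neg_nonpos.mpr (by positivity)) hz

lemma euclid_norm_sq (k : EuclideanSpace ℝ (Fin 3)) :
    ‖k‖ ^ 2 = k 0 ^ 2 + k 1 ^ 2 + k 2 ^ 2 := by
  rw [EuclideanSpace.norm_eq, Real.sq_sqrt (by positivity)]
  simp [Fin.sum_univ_three, Real.norm_eq_abs, sq_abs]

lemma cauchy_schwarz3 (a0 a1 a2 b0 b1 b2 : ℝ) :
    -(a0 * b0 + a1 * b1 + a2 * b2) ≤
      Real.sqrt (a0^2 + a1^2 + a2^2) * Real.sqrt (b0^2 + b1^2 + b2^2) := by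
  set A := Real.sqrt (a0^2 + a1^2 + a2^2) with hA
  set B := Real.sqrt (b0^2 + b1^2 + b2^2) with hB
  have hA2 : A ^ 2 = a0^2 + a1^2 + a2^2 := Real.sq_sqrt (by positivity)
  have hB2 : B ^ 2 = b0^2 + b1^2 + b2^2 := Real.sq_sqrt (by positivity)
  have hAn : 0 ≤ A := Real.sqrt_nonneg _
  have hBn : 0 ≤ B := Real.sqrt_nonneg _
  have key : (a0 * b0 + a1 * b1 + a2 * b2) ^ 2 ≤ (A * B) ^ 2 := by
    nlinarith [sq_nonneg (a0*b1 - a1*b0), sq_nonneg (a0*b2 - a2*b0), sq_nonneg (a1*b2 - a2*b1)]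
  nlinarith [sq_nonneg (a0 * b0 + a1 * b1 + a2 * b2 + A * B), mul_nonneg hAn hBn]

lemma norm_WIntegrand_le (ζ : ℂ) (z : Fin 4 → ℂ) (k : EuclideanSpace ℝ (Fin 3))
    {M δ ε R : ℝ} (hM : ‖ζ‖ ≤ M) (hδ0 : 0 < δ) (hδ : δ ≤ max ζ.re |ζ.im|) (hε : 0 < ε)
    (htube : Real.sqrt ((z 1).im ^ 2 + (z 2).im ^ 2 + (z 3).im ^ 2) ≤ -(z 0).im - ε)
    (hR : ∀ j, ‖z j‖ ≤ R) :
    ‖WIntegrand ζ z k‖ ≤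
      (2 * Real.sqrt δ)⁻¹ * (Real.exp (2 * Real.sqrt M * R) * Real.exp (-(ε * ‖k‖))) := by
  set E := Esqrt ζ k with hE
  have hMn : (0:ℝ) ≤ M := le_trans (norm_nonneg _) hM
  have hsM : (0:ℝ) ≤ Real.sqrt M := Real.sqrt_nonneg M
  have habsE : Real.sqrt δ ≤ ‖E‖ := Esqrt_abs_ge ζ k hδ0.le hδ
  have hsδ : (0:ℝ) < Real.sqrt δ := Real.sqrt_pos.2 hδ0
  have hinv : ‖(2 * E)⁻¹‖ ≤ (2 * Real.sqrt δ)⁻¹ := by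
    rw [norm_inv, norm_mul]
    simp only [Complex.norm_two]
    apply inv_anti₀ (by linarith)
    nlinarith
  set u := -Complex.I * E * z 0 +
      Complex.I * ((k 0 : ℂ) * z 1 + (k 1 : ℂ) * z 2 + (k 2 : ℂ) * z 3) with hu
  have hure : u.re = E.re * (z 0).im + E.im * (z 0).re
      - (k 0 * (z 1).im + k 1 * (z 2).im + k 2 * (z 3).im) := by
    simp [hu, Complex.add_re, Complex.mul_re, Complex.mul_im, Complex.I_re, Complex.I_im,
      Complex.neg_re, Complex.neg_im, Complex.ofReal_re, Complex.ofReal_im]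
    ring
  -- bounds
  have him0 : |(z 0).im| ≤ R := le_trans (Complex.abs_im_le_norm _) (hR 0)
  have hre0 : |(z 0).re| ≤ R := le_trans (Complex.abs_re_le_norm _) (hR 0)
  have h1 : E.im * (z 0).re ≤ Real.sqrt M * R := by
    calc E.im * (z 0).re ≤ |E.im * (z 0).re| := le_abs_self _
      _ = |E.im| * |(z 0).re| := abs_mul _ _
      _ ≤ Real.sqrt M * R := by
          apply mul_le_mul (Esqrt_im_le ζ k hM) hre0 (abs_nonneg _) hsM
  have hz0neg : (z 0).im ≤ -ε := by
    have := Real.sqrt_nonneg ((z 1).im ^ 2 + (z 2).im ^ 2 + (z 3).im ^ 2)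
    linarith
  have h2 : E.re * (z 0).im ≤ ‖k‖ * (z 0).im + Real.sqrt M * R := by
    have hge : ‖k‖ - Real.sqrt M ≤ E.re := Esqrt_re_ge ζ k hM
    have : E.re * (z 0).im ≤ (‖k‖ - Real.sqrt M) * (z 0).im := by
      apply mul_le_mul_of_nonpos_right hge (by linarith)
    have h' : -(z 0).im ≤ R := by
      have := abs_le.1 him0
      linarith [this.1]
    nlinarith
  have h3 : -(k 0 * (z 1).im + k 1 * (z 2).im + k 2 * (z 3).im) ≤ ‖k‖ * (-(z 0).im - ε) := by
    have hcs := cauchy_schwarz3 (k 0) (k 1) (k 2) ((z 1).im) ((z 2).im) ((z 3).im)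
    have hkn : Real.sqrt (k 0 ^2 + k 1 ^2 + k 2 ^2) = ‖k‖ := by
      rw [← euclid_norm_sq, Real.sqrt_sq (norm_nonneg k)]
    rw [hkn] at hcs
    calc -(k 0 * (z 1).im + k 1 * (z 2).im + k 2 * (z 3).im)
        ≤ ‖k‖ * Real.sqrt ((z 1).im ^ 2 + (z 2).im ^ 2 + (z 3).im ^ 2) := hcs
      _ ≤ ‖k‖ * (-(z 0).im - ε) := mul_le_mul_of_nonneg_left htube (norm_nonneg k)
  have hure_le : u.re ≤ 2 * Real.sqrt M * R - ε * ‖k‖ := by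
    rw [hure]; nlinarith
  calc ‖WIntegrand ζ z k‖ = ‖(2 * E)⁻¹‖ * ‖Complex.exp u‖ := by
        rw [WIntegrand, norm_mul]
    _ ≤ (2 * Real.sqrt δ)⁻¹ * (Real.exp (2 * Real.sqrt M * R) * Real.exp (-(ε * ‖k‖))) := by
        apply mul_le_mul hinv ?_ (norm_nonneg _) (by positivity)
        rw [Complex.norm_exp, ← Real.exp_add]
        exact Real.exp_le_exp.2 (by linarith)

lemma base_mem_slitPlane (ζ : ℂ) (hζ : ∀ x : ℝ, x ≤ 0 → ζ ≠ (x : ℂ))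
    (r : ℝ) (hr : 0 ≤ r) : ((r : ℂ) + ζ) ∈ Complex.slitPlane := by
  rw [Complex.mem_slitPlane_iff]
  by_contra h
  push_neg at h
  obtain ⟨h1, h2⟩ := h
  simp only [Complex.add_re, Complex.ofReal_re, Complex.add_im, Complex.ofReal_im,
    zero_add] at h1 h2
  exact hζ ζ.re (by linarith) (Complex.ext rfl h2)

lemma continuousOn_Esqrt_comp {X : Type*} [TopologicalSpace X] {f : X → ℂ}
    {g : X → EuclideanSpace ℝ (Fin 3)} {s : Set X} (hf : ContinuousOn f s)
    (hg : ContinuousOn g s) (hcut : ∀ x ∈ s, ∀ r : ℝ, r ≤ 0 → f x ≠ (r : ℂ)) :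
    ContinuousOn (fun x => Esqrt (f x) (g x)) s := by
  intro x hx
  have hbase : ContinuousWithinAt (fun x => ((‖g x‖ ^ 2 : ℝ) : ℂ) + f x) s x := by
    apply ContinuousWithinAt.add _ (hf x hx)
    exact Complex.continuous_ofReal.continuousAt.comp_continuousWithinAt
      (((hg.norm).pow 2) x hx)
  have hslit : ((‖g x‖ ^ 2 : ℝ) : ℂ) + f x ∈ Complex.slitPlane :=
    base_mem_slitPlane _ (hcut x hx) _ (by positivity)
  exact ContinuousAt.comp_continuousWithinAt (g := fun w : ℂ => w ^ ((1:ℂ)/2))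
    (continuousAt_cpow_const hslit) hbase

lemma exp_decay_rpow {ε : ℝ} (hε : 0 < ε) (r : ℝ) (hr : 0 ≤ r) :
    (1 + r) * Real.exp (-(ε * r)) ≤ (max 1 (5 / ε)) ^ (5:ℕ) * (1 + r) ^ (-(4:ℝ)) := by
  set m := max 1 (5 / ε) with hm
  have hm1 : (1:ℝ) ≤ m := le_max_left _ _
  have hm2 : 5 / ε ≤ m := le_max_right _ _
  have hmε : 5 ≤ m * ε := by
    rw [div_le_iff₀ hε] at hm2; linarith
  have h1 : 1 + r ≤ m * Real.exp (ε * r / 5) := by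
    have he := Real.add_one_le_exp (ε * r / 5)
    nlinarith [mul_le_mul_of_nonneg_left he (by linarith : (0:ℝ) ≤ m)]
  have h5 : (1 + r) ^ (5:ℕ) ≤ m ^ (5:ℕ) * Real.exp (ε * r) := by
    calc (1 + r) ^ (5:ℕ) ≤ (m * Real.exp (ε * r / 5)) ^ (5:ℕ) :=
          pow_le_pow_left₀ (by linarith) h1 5
      _ = m ^ (5:ℕ) * Real.exp (ε * r) := by
          rw [mul_pow, ← Real.exp_nat_mul,
            show ((5:ℕ):ℝ) * (ε * r / 5) = ε * r by push_cast; ring]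
  have h4 : (1 + r) ^ (-(4:ℝ)) = ((1 + r) ^ (4:ℕ))⁻¹ := by
    rw [← Real.rpow_natCast (1 + r) 4, ← Real.rpow_neg (by positivity)]
    norm_num
  have key : (1 + r) * Real.exp (-(ε * r)) * (1 + r) ^ (4:ℕ) ≤ m ^ (5:ℕ) := by
    have heq : (1 + r) * Real.exp (-(ε * r)) * (1 + r) ^ (4:ℕ)
        = (1 + r) ^ (5:ℕ) * Real.exp (-(ε * r)) := by ring
    rw [heq]
    calc (1 + r) ^ (5:ℕ) * Real.exp (-(ε * r))
        ≤ (m ^ (5:ℕ) * Real.exp (ε * r)) * Real.exp (-(ε * r)) :=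
          mul_le_mul_of_nonneg_right h5 (Real.exp_pos _).le
      _ = m ^ (5:ℕ) := by rw [mul_assoc, ← Real.exp_add]; simp
  calc (1 + r) * Real.exp (-(ε * r))
      = ((1 + r) * Real.exp (-(ε * r)) * (1 + r) ^ (4:ℕ)) * ((1 + r) ^ (4:ℕ))⁻¹ := by
        field_simp
    _ ≤ m ^ (5:ℕ) * ((1 + r) ^ (4:ℕ))⁻¹ :=
        mul_le_mul_of_nonneg_right key (by positivity)
    _ = m ^ (5:ℕ) * (1 + r) ^ (-(4:ℝ)) := by rw [h4]

lemma integrable_one_add_norm4 :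
    Integrable (fun k : EuclideanSpace ℝ (Fin 3) => (1 + ‖k‖) ^ (-(4:ℝ))) := by
  apply integrable_one_add_norm
  simp only [finrank_euclideanSpace, Fintype.card_fin]
  norm_num

noncomputable def Lmap (ζ : ℂ) (k : EuclideanSpace ℝ (Fin 3)) : (Fin 4 → ℂ) →L[ℂ] ℂ :=
  (-Complex.I * Esqrt ζ k) • ContinuousLinearMap.proj 0 +
    (Complex.I * (k 0 : ℂ)) • ContinuousLinearMap.proj 1 +
    (Complex.I * (k 1 : ℂ)) • ContinuousLinearMap.proj 2 +
    (Complex.I * (k 2 : ℂ)) • ContinuousLinearMap.proj 3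

lemma Lmap_apply (ζ : ℂ) (k : EuclideanSpace ℝ (Fin 3)) (z : Fin 4 → ℂ) :
    Lmap ζ k z = -Complex.I * Esqrt ζ k * z 0 +
      Complex.I * ((k 0 : ℂ) * z 1 + (k 1 : ℂ) * z 2 + (k 2 : ℂ) * z 3) := by
  simp [Lmap, ContinuousLinearMap.add_apply, ContinuousLinearMap.smul_apply,
    ContinuousLinearMap.proj_apply, smul_eq_mul]
  ring

lemma WIntegrand_eq (ζ : ℂ) (z : Fin 4 → ℂ) (k : EuclideanSpace ℝ (Fin 3)) :
    WIntegrand ζ z k = (2 * Esqrt ζ k)⁻¹ * Complex.exp (Lmap ζ k z) := by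
  rw [WIntegrand, Lmap_apply]

lemma hasFDerivAt_WIntegrand (ζ : ℂ) (k : EuclideanSpace ℝ (Fin 3)) (z : Fin 4 → ℂ) :
    HasFDerivAt (fun z => WIntegrand ζ z k)
      (((2 * Esqrt ζ k)⁻¹ * Complex.exp (Lmap ζ k z)) • Lmap ζ k) z := by
  have h1 : HasFDerivAt (fun z : Fin 4 → ℂ => Lmap ζ k z) (Lmap ζ k) z :=
    (Lmap ζ k).hasFDerivAt
  have h2 := h1.cexp
  have h3 := h2.const_mul ((2 * Esqrt ζ k)⁻¹)
  have heq : (fun z : Fin 4 → ℂ => (2 * Esqrt ζ k)⁻¹ * Complex.exp (Lmap ζ k z))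
      = fun z => WIntegrand ζ z k := by
    funext w; rw [WIntegrand_eq]
  rw [heq] at h3
  rw [smul_smul] at h3
  exact h3

lemma coord_le_norm (k : EuclideanSpace ℝ (Fin 3)) (j : Fin 3) : |k j| ≤ ‖k‖ := by
  have h := euclid_norm_sq k
  have hj : |k j| ^ 2 ≤ ‖k‖ ^ 2 := by
    rw [_root_.sq_abs, h]
    fin_cases j
    · show k 0 ^ 2 ≤ _
      nlinarith [sq_nonneg (k 1), sq_nonneg (k 2)]
    · show k 1 ^ 2 ≤ _
      nlinarith [sq_nonneg (k 0), sq_nonneg (k 2)]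
    · show k 2 ^ 2 ≤ _
      nlinarith [sq_nonneg (k 0), sq_nonneg (k 1)]
  nlinarith [abs_nonneg (k j), norm_nonneg k]

lemma norm_Lmap_le (ζ : ℂ) (k : EuclideanSpace ℝ (Fin 3)) :
    ‖Lmap ζ k‖ ≤ ‖Esqrt ζ k‖ + 3 * ‖k‖ := by
  apply ContinuousLinearMap.opNorm_le_bound _
    (by positivity)
  intro z
  rw [Lmap_apply]
  have hz : ∀ j : Fin 4, ‖z j‖ ≤ ‖z‖ := fun j => by
    simpa using norm_le_pi_norm z j
  have e1 : ‖-Complex.I * Esqrt ζ k * z 0‖ = ‖Esqrt ζ k‖ * ‖z 0‖ := by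
    simp
  have e2 : ‖Complex.I * ((k 0 : ℂ) * z 1 + (k 1 : ℂ) * z 2 + (k 2 : ℂ) * z 3)‖
      ≤ |k 0| * ‖z‖ + |k 1| * ‖z‖ + |k 2| * ‖z‖ := by
    rw [norm_mul, Complex.norm_I, one_mul]
    calc ‖(k 0 : ℂ) * z 1 + (k 1 : ℂ) * z 2 + (k 2 : ℂ) * z 3‖
        ≤ ‖(k 0 : ℂ) * z 1‖ + ‖(k 1 : ℂ) * z 2‖ + ‖(k 2 : ℂ) * z 3‖ :=
          norm_add₃_le
      _ = |k 0| * ‖z 1‖ + |k 1| * ‖z 2‖ + |k 2| * ‖z 3‖ := by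
          simp [Complex.norm_real]
      _ ≤ |k 0| * ‖z‖ + |k 1| * ‖z‖ + |k 2| * ‖z‖ := by
          gcongr <;> first | exact abs_nonneg _ | exact hz _
  calc ‖-Complex.I * Esqrt ζ k * z 0 +
        Complex.I * ((k 0 : ℂ) * z 1 + (k 1 : ℂ) * z 2 + (k 2 : ℂ) * z 3)‖
      ≤ ‖-Complex.I * Esqrt ζ k * z 0‖ +
        ‖Complex.I * ((k 0 : ℂ) * z 1 + (k 1 : ℂ) * z 2 + (k 2 : ℂ) * z 3)‖ := norm_add_le _ _
    _ ≤ ‖Esqrt ζ k‖ * ‖z‖ + (|k 0| * ‖z‖ + |k 1| * ‖z‖ + |k 2| * ‖z‖) := by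
        rw [e1]
        gcongr <;> first | exact norm_nonneg _ | exact hz _
    _ ≤ (‖Esqrt ζ k‖ + 3 * ‖k‖) * ‖z‖ := by
        have h0 := coord_le_norm k 0
        have h1 := coord_le_norm k 1
        have h2 := coord_le_norm k 2
        have := norm_nonneg z
        nlinarith

lemma integrable_exp_decay {ε : ℝ} (hε : 0 < ε) :
    Integrable (fun k : EuclideanSpace ℝ (Fin 3) => Real.exp (-(ε * ‖k‖))) := by
  apply Integrable.mono' (integrable_one_add_norm4.const_mul ((max 1 (5 / ε)) ^ (5:ℕ)))
  · exact (Real.continuous_exp.comp (continuous_const.mul continuous_norm : Continuous fun k : EuclideanSpace ℝ (Fin 3) => ε * ‖k‖).neg).aestronglyMeasurable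
  · refine Filter.Eventually.of_forall fun k => ?_
    rw [Real.norm_eq_abs, abs_of_pos (Real.exp_pos _)]
    calc Real.exp (-(ε * ‖k‖)) ≤ (1 + ‖k‖) * Real.exp (-(ε * ‖k‖)) := by
          nlinarith [Real.exp_pos (-(ε * ‖k‖)), norm_nonneg k]
      _ ≤ (max 1 (5 / ε)) ^ (5:ℕ) * (1 + ‖k‖) ^ (-(4:ℝ)) :=
          exp_decay_rpow hε ‖k‖ (norm_nonneg k)

lemma delta_pos {ζ : ℂ} (hζ : ∀ x : ℝ, x ≤ 0 → ζ ≠ (x : ℂ)) : 0 < max ζ.re |ζ.im| := by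
  rcases eq_or_ne ζ.im 0 with h | h
  · have : ζ = ((ζ.re : ℝ) : ℂ) := Complex.ext rfl (by simp [h])
    rcases lt_or_ge 0 ζ.re with hre | hre
    · exact lt_max_of_lt_left hre
    · exact absurd this (hζ ζ.re hre)
  · exact lt_max_of_lt_right (abs_pos.2 h)

lemma continuous_WIntegrand {ζ : ℂ} (hζ : ∀ x : ℝ, x ≤ 0 → ζ ≠ (x : ℂ)) (z : Fin 4 → ℂ) :
    Continuous (fun k => WIntegrand ζ z k) := by
  have hE : Continuous (fun k : EuclideanSpace ℝ (Fin 3) => Esqrt ζ k) := by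
    rw [← continuousOn_univ]
    exact continuousOn_Esqrt_comp continuousOn_const continuousOn_id
      (fun x _ r hr => hζ r hr)
  have hcoord : ∀ j : Fin 3, Continuous (fun k : EuclideanSpace ℝ (Fin 3) => k j) :=
    fun j => by fun_prop
  have hEne : ∀ k, (2 : ℂ) * Esqrt ζ k ≠ 0 := fun k =>
    mul_ne_zero two_ne_zero (Esqrt_ne_zero ζ k hζ)
  apply Continuous.mul
  · exact ((continuous_const.mul hE).inv₀ hEne)
  · apply Complex.continuous_exp.comp
    apply Continuous.add
    · exact (continuous_const.mul hE).mul continuous_const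
    · apply continuous_const.mul
      exact (((Complex.continuous_ofReal.comp (hcoord 0)).mul continuous_const).add
        ((Complex.continuous_ofReal.comp (hcoord 1)).mul continuous_const)).add
        ((Complex.continuous_ofReal.comp (hcoord 2)).mul continuous_const)

lemma integrable_WIntegrand {ζ : ℂ} (hζ : ∀ x : ℝ, x ≤ 0 → ζ ≠ (x : ℂ))
    {z : Fin 4 → ℂ} (hz : z ∈ ForwardTube) : Integrable (WIntegrand ζ z) := by
  set ε := -(z 0).im - Real.sqrt ((z 1).im ^ 2 + (z 2).im ^ 2 + (z 3).im ^ 2) with hε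
  have hεpos : 0 < ε := by
    have := hz
    rw [ForwardTube, Set.mem_setOf_eq] at this
    simp only [hε]; linarith
  have hδ := delta_pos hζ
  apply Integrable.mono'
    (((integrable_exp_decay hεpos).const_mul
      ((2 * Real.sqrt (max ζ.re |ζ.im|))⁻¹ * Real.exp (2 * Real.sqrt (‖ζ‖) * ‖z‖))))
  · exact (continuous_WIntegrand hζ z).aestronglyMeasurable
  · refine Filter.Eventually.of_forall fun k => ?_
    have hb := norm_WIntegrand_le ζ z k (le_refl (‖ζ‖)) hδ (le_refl _) hεpos
      (by simp only [hε]; linarith [Real.sqrt_nonneg ((z 1).im ^ 2 + (z 2).im ^ 2 + (z 3).im ^ 2)])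
      (fun j => by simpa using norm_le_pi_norm z j)
    calc ‖WIntegrand ζ z k‖ ≤ _ := hb
      _ = _ := by ring

noncomputable def Gfun (γ γ' : ℝ → ℂ) (D : ℂ → ℂ) (z : Fin 4 → ℂ)
    (p : ℝ × EuclideanSpace ℝ (Fin 3)) : ℂ :=
  D (γ p.1) * γ' p.1 * WIntegrand (γ p.1) z p.2

noncomputable def G'fun (γ γ' : ℝ → ℂ) (D : ℂ → ℂ) (z : Fin 4 → ℂ)
    (p : ℝ × EuclideanSpace ℝ (Fin 3)) : (Fin 4 → ℂ) →L[ℂ] ℂ :=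
  (D (γ p.1) * γ' p.1 *
    ((2 * Esqrt (γ p.1) p.2)⁻¹ * Complex.exp (Lmap (γ p.1) p.2 z))) • Lmap (γ p.1) p.2

def Sset : Set (ℝ × EuclideanSpace ℝ (Fin 3)) :=
  (Set.Icc (0:ℝ) 1) ×ˢ (Set.univ : Set (EuclideanSpace ℝ (Fin 3)))

lemma Sset_measurable : MeasurableSet Sset :=
  measurableSet_Icc.prod MeasurableSet.univ

lemma mem_Sset_fst {p : ℝ × EuclideanSpace ℝ (Fin 3)} (hp : p ∈ Sset) :
    p.1 ∈ Set.Icc (0:ℝ) 1 := hp.1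

section Cont

variable {γ γ' : ℝ → ℂ} {D : ℂ → ℂ}



lemma contOn_gfst (hγc : ContinuousOn γ (Set.Icc (0:ℝ) 1))
    : ContinuousOn (fun p : ℝ × EuclideanSpace ℝ (Fin 3) => γ p.1) Sset :=
  hγc.comp continuous_fst.continuousOn (fun _ hp => hp.1)

lemma contOn_E (hγc : ContinuousOn γ (Set.Icc (0:ℝ) 1)) (him : ∀ t ∈ Set.Icc (0:ℝ) 1, ∀ x : ℝ, x ≤ 0 → γ t ≠ (x : ℂ))
    : ContinuousOn (fun p : ℝ × EuclideanSpace ℝ (Fin 3) => Esqrt (γ p.1) p.2) Sset :=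
  continuousOn_Esqrt_comp (contOn_gfst hγc) continuous_snd.continuousOn
    (fun p hp r hr => him p.1 hp.1 r hr)

lemma contOn_expfac (hγc : ContinuousOn γ (Set.Icc (0:ℝ) 1)) (him : ∀ t ∈ Set.Icc (0:ℝ) 1, ∀ x : ℝ, x ≤ 0 → γ t ≠ (x : ℂ))
    (z : Fin 4 → ℂ) :
    ContinuousOn (fun p : ℝ × EuclideanSpace ℝ (Fin 3) =>
      Complex.exp (Lmap (γ p.1) p.2 z)) Sset := by
  have : (fun p : ℝ × EuclideanSpace ℝ (Fin 3) => Complex.exp (Lmap (γ p.1) p.2 z))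
      = fun p => Complex.exp (-Complex.I * Esqrt (γ p.1) p.2 * z 0 +
        Complex.I * ((p.2 0 : ℂ) * z 1 + (p.2 1 : ℂ) * z 2 + (p.2 2 : ℂ) * z 3)) := by
    funext p; rw [Lmap_apply]
  rw [this]
  apply Complex.continuous_exp.comp_continuousOn
  apply ContinuousOn.add
  · exact ((continuousOn_const.mul (contOn_E hγc him)).mul continuousOn_const)
  · apply continuousOn_const.mul
    have hc : ∀ j : Fin 3, Continuous (fun p : ℝ × EuclideanSpace ℝ (Fin 3) => ((p.2 j : ℝ) : ℂ)) :=
      fun j => by fun_prop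
    exact (((hc 0).continuousOn.mul continuousOn_const).add
      ((hc 1).continuousOn.mul continuousOn_const)).add
      ((hc 2).continuousOn.mul continuousOn_const)

lemma contOn_inv2E (hγc : ContinuousOn γ (Set.Icc (0:ℝ) 1)) (him : ∀ t ∈ Set.Icc (0:ℝ) 1, ∀ x : ℝ, x ≤ 0 → γ t ≠ (x : ℂ))
    : ContinuousOn
    (fun p : ℝ × EuclideanSpace ℝ (Fin 3) => (2 * Esqrt (γ p.1) p.2)⁻¹) Sset := by
  apply ContinuousOn.inv₀ (continuousOn_const.mul (contOn_E hγc him))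
  exact fun p hp => mul_ne_zero two_ne_zero (Esqrt_ne_zero _ _ (him p.1 hp.1))

lemma contOn_DG (hγc : ContinuousOn γ (Set.Icc (0:ℝ) 1)) (hγ' : ContinuousOn γ' (Set.Icc (0:ℝ) 1)) (hD : Continuous D)
    : ContinuousOn
    (fun p : ℝ × EuclideanSpace ℝ (Fin 3) => D (γ p.1) * γ' p.1) Sset :=
  (hD.comp_continuousOn (contOn_gfst hγc)).mul
    (hγ'.comp continuous_fst.continuousOn (fun _ hp => hp.1))

lemma contOn_G (hγc : ContinuousOn γ (Set.Icc (0:ℝ) 1)) (hγ' : ContinuousOn γ' (Set.Icc (0:ℝ) 1)) (him : ∀ t ∈ Set.Icc (0:ℝ) 1, ∀ x : ℝ, x ≤ 0 → γ t ≠ (x : ℂ)) (hD : Continuous D)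
    (z : Fin 4 → ℂ) : ContinuousOn (Gfun γ γ' D z) Sset := by
  have : Gfun γ γ' D z = fun p : ℝ × EuclideanSpace ℝ (Fin 3) =>
      D (γ p.1) * γ' p.1 * ((2 * Esqrt (γ p.1) p.2)⁻¹ * Complex.exp (Lmap (γ p.1) p.2 z)) := by
    funext p; rw [Gfun, WIntegrand_eq]
  rw [this]
  exact (contOn_DG hγc hγ' hD).mul ((contOn_inv2E hγc him).mul (contOn_expfac hγc him z))

lemma contOn_Lmap (hγc : ContinuousOn γ (Set.Icc (0:ℝ) 1)) (him : ∀ t ∈ Set.Icc (0:ℝ) 1, ∀ x : ℝ, x ≤ 0 → γ t ≠ (x : ℂ))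
    : ContinuousOn
    (fun p : ℝ × EuclideanSpace ℝ (Fin 3) => Lmap (γ p.1) p.2) Sset := by
  have hc : ∀ j : Fin 3, Continuous (fun p : ℝ × EuclideanSpace ℝ (Fin 3) => ((p.2 j : ℝ) : ℂ)) :=
    fun j => by fun_prop
  apply ContinuousOn.add
  apply ContinuousOn.add
  apply ContinuousOn.add
  · exact (continuousOn_const.mul (contOn_E hγc him)).smul continuousOn_const
  · exact (continuousOn_const.mul (hc 0).continuousOn).smul continuousOn_const
  · exact (continuousOn_const.mul (hc 1).continuousOn).smul continuousOn_const
  · exact (continuousOn_const.mul (hc 2).continuousOn).smul continuousOn_const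

lemma contOn_G' (hγc : ContinuousOn γ (Set.Icc (0:ℝ) 1)) (hγ' : ContinuousOn γ' (Set.Icc (0:ℝ) 1)) (him : ∀ t ∈ Set.Icc (0:ℝ) 1, ∀ x : ℝ, x ≤ 0 → γ t ≠ (x : ℂ)) (hD : Continuous D)
    (z : Fin 4 → ℂ) : ContinuousOn (G'fun γ γ' D z) Sset := by
  apply ContinuousOn.smul (f := fun p : ℝ × EuclideanSpace ℝ (Fin 3) => D (γ p.1) * γ' p.1 *
      ((2 * Esqrt (γ p.1) p.2)⁻¹ * Complex.exp (Lmap (γ p.1) p.2 z))) (g := fun p => Lmap (γ p.1) p.2)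
  · exact (contOn_DG hγc hγ' hD).mul ((contOn_inv2E hγc him).mul (contOn_expfac hγc him z))
  · exact contOn_Lmap hγc him

end Cont

lemma sqrt3_triangle (b1 b2 b3 d1 d2 d3 : ℝ) :
    Real.sqrt ((b1 + d1) ^ 2 + (b2 + d2) ^ 2 + (b3 + d3) ^ 2) ≤
      Real.sqrt (b1 ^ 2 + b2 ^ 2 + b3 ^ 2) + (|d1| + |d2| + |d3|) := by
  set A := Real.sqrt ((b1 + d1) ^ 2 + (b2 + d2) ^ 2 + (b3 + d3) ^ 2) with hA
  set B := Real.sqrt (b1 ^ 2 + b2 ^ 2 + b3 ^ 2) with hB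
  have hA2 : A ^ 2 = (b1 + d1) ^ 2 + (b2 + d2) ^ 2 + (b3 + d3) ^ 2 := Real.sq_sqrt (by positivity)
  have hB2 : B ^ 2 = b1 ^ 2 + b2 ^ 2 + b3 ^ 2 := Real.sq_sqrt (by positivity)
  have hAn : 0 ≤ A := Real.sqrt_nonneg _
  have hBn : 0 ≤ B := Real.sqrt_nonneg _
  have h1 : |b1| ≤ B := by
    nlinarith [sq_nonneg b2, sq_nonneg b3, _root_.sq_abs b1, abs_nonneg b1]
  have h2 : |b2| ≤ B := by
    nlinarith [sq_nonneg b1, sq_nonneg b3, _root_.sq_abs b2, abs_nonneg b2]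
  have h3 : |b3| ≤ B := by
    nlinarith [sq_nonneg b1, sq_nonneg b2, _root_.sq_abs b3, abs_nonneg b3]
  have e1 : b1 * d1 ≤ B * |d1| := by
    calc b1 * d1 ≤ |b1 * d1| := le_abs_self _
      _ = |b1| * |d1| := abs_mul _ _
      _ ≤ B * |d1| := mul_le_mul_of_nonneg_right h1 (abs_nonneg _)
  have e2 : b2 * d2 ≤ B * |d2| := by
    calc b2 * d2 ≤ |b2 * d2| := le_abs_self _
      _ = |b2| * |d2| := abs_mul _ _
      _ ≤ B * |d2| := mul_le_mul_of_nonneg_right h2 (abs_nonneg _)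
  have e3 : b3 * d3 ≤ B * |d3| := by
    calc b3 * d3 ≤ |b3 * d3| := le_abs_self _
      _ = |b3| * |d3| := abs_mul _ _
      _ ≤ B * |d3| := mul_le_mul_of_nonneg_right h3 (abs_nonneg _)
  have ed : d1 ^ 2 + d2 ^ 2 + d3 ^ 2 ≤ (|d1| + |d2| + |d3|) ^ 2 := by
    nlinarith [abs_nonneg d1, abs_nonneg d2, abs_nonneg d3, _root_.sq_abs d1, _root_.sq_abs d2,
      _root_.sq_abs d3, mul_nonneg (abs_nonneg d1) (abs_nonneg d2),
      mul_nonneg (abs_nonneg d1) (abs_nonneg d3), mul_nonneg (abs_nonneg d2) (abs_nonneg d3)]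
  have hYn : 0 ≤ B + (|d1| + |d2| + |d3|) := by positivity
  have hA2' : A ^ 2 ≤ (B + (|d1| + |d2| + |d3|)) ^ 2 := by nlinarith
  have := Real.sqrt_le_sqrt hA2'
  rwa [Real.sqrt_sq hAn, Real.sqrt_sq hYn] at this

lemma tube_ball {z₀ : Fin 4 → ℂ} (hz₀ : z₀ ∈ ForwardTube) :
    ∃ ε > 0, ∃ r > 0, ∃ R : ℝ, ∀ z ∈ Metric.ball z₀ r,
      (Real.sqrt ((z 1).im ^ 2 + (z 2).im ^ 2 + (z 3).im ^ 2) ≤ -(z 0).im - ε) ∧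
      (∀ j, ‖z j‖ ≤ R) := by
  rw [ForwardTube, Set.mem_setOf_eq] at hz₀
  set S0 := Real.sqrt ((z₀ 1).im ^ 2 + (z₀ 2).im ^ 2 + (z₀ 3).im ^ 2) with hS0
  set a := -(z₀ 0).im - S0 with ha
  have hapos : 0 < a := by simp only [ha]; linarith
  refine ⟨a / 2, by linarith, a / 8, by linarith, ‖z₀‖ + a / 8, fun z hz => ?_⟩
  have hdist : ∀ j : Fin 4, ‖z j - z₀ j‖ ≤ a / 8 := by
    intro j
    have h1 : dist (z j) (z₀ j) ≤ dist z z₀ := dist_le_pi_dist z z₀ j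
    have h2 : dist z z₀ < a / 8 := Metric.mem_ball.1 hz
    rw [Complex.dist_eq] at h1
    linarith
  have him : ∀ j : Fin 4, |(z j).im - (z₀ j).im| ≤ a / 8 := by
    intro j
    have := Complex.abs_im_le_norm (z j - z₀ j)
    rw [Complex.sub_im] at this
    exact le_trans this (hdist j)
  constructor
  · have htri : Real.sqrt ((z 1).im ^ 2 + (z 2).im ^ 2 + (z 3).im ^ 2) ≤
        S0 + (|(z 1).im - (z₀ 1).im| + |(z 2).im - (z₀ 2).im| + |(z 3).im - (z₀ 3).im|) := by
      have := sqrt3_triangle ((z₀ 1).im) ((z₀ 2).im) ((z₀ 3).im)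
        ((z 1).im - (z₀ 1).im) ((z 2).im - (z₀ 2).im) ((z 3).im - (z₀ 3).im)
      simpa using this
    have h0 := him 0
    have h1' := him 1
    have h2' := him 2
    have h3' := him 3
    have habs0 := abs_le.1 h0
    simp only [ha] at *
    linarith [htri, habs0.1, habs0.2, h1', h2', h3']
  · intro j
    have h1 : ‖z j‖ ≤ ‖z₀ j‖ + ‖z j - z₀ j‖ := by
      have := norm_add_le (z₀ j) (z j - z₀ j)
      simpa using this
    have h2 : ‖z₀ j‖ ≤ ‖z₀‖ := by simpa using norm_le_pi_norm z₀ j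
    linarith [hdist j]

lemma norm_Gfun_le (γ γ' : ℝ → ℂ) (D : ℂ → ℂ) (z : Fin 4 → ℂ)
    (p : ℝ × EuclideanSpace ℝ (Fin 3)) {Kd M δ ε R : ℝ}
    (hKd : ‖D (γ p.1) * γ' p.1‖ ≤ Kd)
    (hM : ‖γ p.1‖ ≤ M) (hδ0 : 0 < δ)
    (hδ : δ ≤ max (γ p.1).re |(γ p.1).im|) (hε : 0 < ε)
    (htube : Real.sqrt ((z 1).im ^ 2 + (z 2).im ^ 2 + (z 3).im ^ 2) ≤ -(z 0).im - ε)
    (hR : ∀ j, ‖z j‖ ≤ R) :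
    ‖Gfun γ γ' D z p‖ ≤
      (Kd * ((2 * Real.sqrt δ)⁻¹ * Real.exp (2 * Real.sqrt M * R) * (max 1 (5 / ε)) ^ (5:ℕ))) *
        (1 + ‖p.2‖) ^ (-(4:ℝ)) := by
  have hKd0 : 0 ≤ Kd := le_trans (norm_nonneg _) hKd
  have hW := norm_WIntegrand_le (γ p.1) z p.2 hM hδ0 hδ hε htube hR
  have hQ := exp_decay_rpow hε ‖p.2‖ (norm_nonneg _)
  have hQ0 : (0:ℝ) ≤ (1 + ‖p.2‖) ^ (-(4:ℝ)) := Real.rpow_nonneg (by positivity) _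
  have hexp : Real.exp (-(ε * ‖p.2‖)) ≤ (max 1 (5 / ε)) ^ (5:ℕ) * (1 + ‖p.2‖) ^ (-(4:ℝ)) := by
    calc Real.exp (-(ε * ‖p.2‖)) ≤ (1 + ‖p.2‖) * Real.exp (-(ε * ‖p.2‖)) := by
          nlinarith [Real.exp_pos (-(ε * ‖p.2‖)), norm_nonneg p.2]
      _ ≤ _ := hQ
  rw [Gfun, norm_mul]
  have hC0 : (0:ℝ) ≤ (2 * Real.sqrt δ)⁻¹ * Real.exp (2 * Real.sqrt M * R) := by positivity
  calc ‖D (γ p.1) * γ' p.1‖ * ‖WIntegrand (γ p.1) z p.2‖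
      ≤ Kd * ((2 * Real.sqrt δ)⁻¹ * (Real.exp (2 * Real.sqrt M * R) * Real.exp (-(ε * ‖p.2‖)))) :=
        mul_le_mul hKd hW (norm_nonneg _) hKd0
    _ ≤ _ := by
        rw [show Kd * ((2 * Real.sqrt δ)⁻¹ * (Real.exp (2 * Real.sqrt M * R) *
            Real.exp (-(ε * ‖p.2‖)))) = (Kd * ((2 * Real.sqrt δ)⁻¹ *
            Real.exp (2 * Real.sqrt M * R))) * Real.exp (-(ε * ‖p.2‖)) by ring,
          show (Kd * ((2 * Real.sqrt δ)⁻¹ * Real.exp (2 * Real.sqrt M * R) *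
            (max 1 (5 / ε)) ^ (5:ℕ))) * (1 + ‖p.2‖) ^ (-(4:ℝ)) =
            (Kd * ((2 * Real.sqrt δ)⁻¹ * Real.exp (2 * Real.sqrt M * R))) *
            ((max 1 (5 / ε)) ^ (5:ℕ) * (1 + ‖p.2‖) ^ (-(4:ℝ))) by ring]
        exact mul_le_mul_of_nonneg_left hexp (by positivity)

lemma norm_G'fun_le (γ γ' : ℝ → ℂ) (D : ℂ → ℂ) (z : Fin 4 → ℂ)
    (p : ℝ × EuclideanSpace ℝ (Fin 3)) {Kd M δ ε R : ℝ}
    (hKd : ‖D (γ p.1) * γ' p.1‖ ≤ Kd)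
    (hM : ‖γ p.1‖ ≤ M) (hδ0 : 0 < δ)
    (hδ : δ ≤ max (γ p.1).re |(γ p.1).im|) (hε : 0 < ε)
    (htube : Real.sqrt ((z 1).im ^ 2 + (z 2).im ^ 2 + (z 3).im ^ 2) ≤ -(z 0).im - ε)
    (hR : ∀ j, ‖z j‖ ≤ R) :
    ‖G'fun γ γ' D z p‖ ≤
      (Kd * ((2 * Real.sqrt δ)⁻¹ * Real.exp (2 * Real.sqrt M * R) * (4 + Real.sqrt M) *
        (max 1 (5 / ε)) ^ (5:ℕ))) * (1 + ‖p.2‖) ^ (-(4:ℝ)) := by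
  have hKd0 : 0 ≤ Kd := le_trans (norm_nonneg _) hKd
  have hMn : (0:ℝ) ≤ M := le_trans (norm_nonneg _) hM
  have hsM : (0:ℝ) ≤ Real.sqrt M := Real.sqrt_nonneg M
  have hW := norm_WIntegrand_le (γ p.1) z p.2 hM hδ0 hδ hε htube hR
  rw [WIntegrand_eq] at hW
  have hL : ‖Lmap (γ p.1) p.2‖ ≤ (4 + Real.sqrt M) * (1 + ‖p.2‖) := by
    calc ‖Lmap (γ p.1) p.2‖ ≤ ‖Esqrt (γ p.1) p.2‖ + 3 * ‖p.2‖ := norm_Lmap_le _ _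
      _ ≤ (‖p.2‖ + Real.sqrt M) + 3 * ‖p.2‖ := by
          linarith [Esqrt_abs_le (γ p.1) p.2 hM]
      _ ≤ (4 + Real.sqrt M) * (1 + ‖p.2‖) := by nlinarith [norm_nonneg p.2]
  have hQ := exp_decay_rpow hε ‖p.2‖ (norm_nonneg _)
  have hQ0 : (0:ℝ) ≤ (1 + ‖p.2‖) ^ (-(4:ℝ)) := Real.rpow_nonneg (by positivity) _
  have hnorm : ‖G'fun γ γ' D z p‖ = ‖D (γ p.1) * γ' p.1 *
      ((2 * Esqrt (γ p.1) p.2)⁻¹ * Complex.exp (Lmap (γ p.1) p.2 z))‖ * ‖Lmap (γ p.1) p.2‖ := by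
    rw [G'fun]
    exact norm_smul (D (γ p.1) * γ' p.1 *
      ((2 * Esqrt (γ p.1) p.2)⁻¹ * Complex.exp (Lmap (γ p.1) p.2 z))) (Lmap (γ p.1) p.2)
  rw [hnorm, norm_mul]
  set C := (2 * Real.sqrt δ)⁻¹ * Real.exp (2 * Real.sqrt M * R) with hC
  have hC0 : 0 ≤ C := by positivity
  have hWn : ‖(2 * Esqrt (γ p.1) p.2)⁻¹ * Complex.exp (Lmap (γ p.1) p.2 z)‖
      ≤ C * Real.exp (-(ε * ‖p.2‖)) := by
    rw [hC]; calc _ ≤ _ := hW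
    _ = (2 * Real.sqrt δ)⁻¹ * Real.exp (2 * Real.sqrt M * R) * Real.exp (-(ε * ‖p.2‖)) := by ring
  calc ‖D (γ p.1) * γ' p.1‖ * ‖(2 * Esqrt (γ p.1) p.2)⁻¹ * Complex.exp (Lmap (γ p.1) p.2 z)‖ *
        ‖Lmap (γ p.1) p.2‖
      ≤ (Kd * (C * Real.exp (-(ε * ‖p.2‖)))) * ((4 + Real.sqrt M) * (1 + ‖p.2‖)) := by
        apply mul_le_mul _ hL (norm_nonneg _) (by positivity)
        exact mul_le_mul hKd hWn (norm_nonneg _) hKd0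
    _ = (Kd * (C * (4 + Real.sqrt M))) * ((1 + ‖p.2‖) * Real.exp (-(ε * ‖p.2‖))) := by ring
    _ ≤ (Kd * (C * (4 + Real.sqrt M))) * ((max 1 (5 / ε)) ^ (5:ℕ) * (1 + ‖p.2‖) ^ (-(4:ℝ))) :=
        mul_le_mul_of_nonneg_left hQ (by positivity)
    _ = (Kd * (C * Real.exp 0 * (4 + Real.sqrt M) * (max 1 (5 / ε)) ^ (5:ℕ))) *
          (1 + ‖p.2‖) ^ (-(4:ℝ)) := by rw [Real.exp_zero]; ring
    _ = _ := by rw [hC]; rw [Real.exp_zero]; ring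

lemma hasFDerivAt_G (γ γ' : ℝ → ℂ) (D : ℂ → ℂ) (z : Fin 4 → ℂ)
    (p : ℝ × EuclideanSpace ℝ (Fin 3)) :
    HasFDerivAt (fun z => Gfun γ γ' D z p) (G'fun γ γ' D z p) z := by
  have h := (hasFDerivAt_WIntegrand (γ p.1) p.2 z).const_mul (D (γ p.1) * γ' p.1)
  have heq : (fun z => D (γ p.1) * γ' p.1 * WIntegrand (γ p.1) z p.2)
      = fun z => Gfun γ γ' D z p := by funext w; rw [Gfun]
  rw [heq] at h
  rw [smul_smul] at h
  exact h

noncomputable def Pmeas : Measure (ℝ × EuclideanSpace ℝ (Fin 3)) :=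
  (volume.restrict (Set.Icc (0:ℝ) 1)).prod volume

lemma Pmeas_eq : Pmeas = ((volume : Measure ℝ).prod volume).restrict Sset := by
  rw [Pmeas, Sset, ← Measure.prod_restrict, Measure.restrict_univ]

lemma ae_mem_Sset : ∀ᵐ p ∂Pmeas, p ∈ Sset := by
  rw [Pmeas_eq]
  exact ae_restrict_mem Sset_measurable

instance : IsFiniteMeasure ((volume : Measure ℝ).restrict (Set.Icc (0:ℝ) 1)) :=
  ⟨by rw [Measure.restrict_apply_univ]; exact measure_Icc_lt_top⟩

lemma integrable_bound_Pmeas (B : ℝ) :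
    Integrable (fun p : ℝ × EuclideanSpace ℝ (Fin 3) => B * (1 + ‖p.2‖) ^ (-(4:ℝ))) Pmeas := by
  have h2 : Integrable (fun k : EuclideanSpace ℝ (Fin 3) => B * (1 + ‖k‖) ^ (-(4:ℝ))) volume :=
    integrable_one_add_norm4.const_mul B
  have h1 : Integrable (fun _ : ℝ => (1:ℝ)) (volume.restrict (Set.Icc (0:ℝ) 1)) :=
    integrable_const 1
  have := h1.mul_prod h2
  rw [Pmeas]
  simpa using this

lemma meas_G {γ γ' : ℝ → ℂ} {D : ℂ → ℂ} (hγc : ContinuousOn γ (Set.Icc (0:ℝ) 1))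
    (hγ' : ContinuousOn γ' (Set.Icc (0:ℝ) 1))
    (him : ∀ t ∈ Set.Icc (0:ℝ) 1, ∀ x : ℝ, x ≤ 0 → γ t ≠ (x : ℂ))
    (hD : Continuous D) (z : Fin 4 → ℂ) :
    AEStronglyMeasurable (Gfun γ γ' D z) Pmeas := by
  rw [Pmeas_eq]
  exact (contOn_G hγc hγ' him hD z).aestronglyMeasurable Sset_measurable

lemma meas_G' {γ γ' : ℝ → ℂ} {D : ℂ → ℂ} (hγc : ContinuousOn γ (Set.Icc (0:ℝ) 1))
    (hγ' : ContinuousOn γ' (Set.Icc (0:ℝ) 1))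
    (him : ∀ t ∈ Set.Icc (0:ℝ) 1, ∀ x : ℝ, x ≤ 0 → γ t ≠ (x : ℂ))
    (hD : Continuous D) (z : Fin 4 → ℂ) :
    AEStronglyMeasurable (G'fun γ γ' D z) Pmeas := by
  rw [Pmeas_eq]
  exact (contOn_G' hγc hγ' him hD z).aestronglyMeasurable Sset_measurable

lemma main_lemma (γ γ' : ℝ → ℂ) (D : ℂ → ℂ)
    (hγc : ContinuousOn γ (Set.Icc (0:ℝ) 1))
    (hγ' : ContinuousOn γ' (Set.Icc (0:ℝ) 1))
    (him : ∀ t ∈ Set.Icc (0:ℝ) 1, ∀ x : ℝ, x ≤ 0 → γ t ≠ (x : ℂ))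
    (hD : Continuous D) {z₀ : Fin 4 → ℂ} (hz₀ : z₀ ∈ ForwardTube) :
    ∃ r > 0, (∀ z ∈ Metric.ball z₀ r, Integrable (Gfun γ γ' D z) Pmeas) ∧
      HasFDerivAt (fun z => ∫ p, Gfun γ γ' D z p ∂Pmeas)
        (∫ p, G'fun γ γ' D z₀ p ∂Pmeas) z₀ := by
  obtain ⟨ε, hε, r, hr, R, hball⟩ := tube_ball hz₀
  -- bounds on the compact contour
  obtain ⟨Kd, hKd⟩ := isCompact_Icc.exists_bound_of_continuousOn
    ((hD.comp_continuousOn hγc).mul hγ')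
  obtain ⟨M, hM⟩ := isCompact_Icc.exists_bound_of_continuousOn hγc
  have hM' : ∀ t ∈ Set.Icc (0:ℝ) 1, ‖γ t‖ ≤ M := fun t ht => hM t ht
  -- the minimum of max re |im| on the contour
  have hcont : ContinuousOn (fun t => max (γ t).re |(γ t).im|) (Set.Icc (0:ℝ) 1) :=
    ContinuousOn.sup (Complex.continuous_re.comp_continuousOn hγc)
      ((continuous_abs.comp Complex.continuous_im).comp_continuousOn hγc)
  obtain ⟨t₀, ht₀, hmin⟩ := isCompact_Icc.exists_isMinOn
    (Set.nonempty_Icc.2 zero_le_one) hcont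
  set δ := max (γ t₀).re |(γ t₀).im| with hδdef
  have hδpos : 0 < δ := delta_pos (him t₀ ht₀)
  have hδle : ∀ t ∈ Set.Icc (0:ℝ) 1, δ ≤ max (γ t).re |(γ t).im| := fun t ht => hmin ht
  refine ⟨r, hr, ?_, ?_⟩
  · intro z hz
    apply Integrable.mono' (integrable_bound_Pmeas
      (Kd * ((2 * Real.sqrt δ)⁻¹ * Real.exp (2 * Real.sqrt M * R) * (max 1 (5 / ε)) ^ (5:ℕ))))
      (meas_G hγc hγ' him hD z)
    filter_upwards [ae_mem_Sset] with p hp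
    exact norm_Gfun_le γ γ' D z p (hKd p.1 hp.1) (hM' p.1 hp.1) hδpos (hδle p.1 hp.1) hε
      (hball z hz).1 (hball z hz).2
  · have hIz₀ : Integrable (Gfun γ γ' D z₀) Pmeas := by
      apply Integrable.mono' (integrable_bound_Pmeas
        (Kd * ((2 * Real.sqrt δ)⁻¹ * Real.exp (2 * Real.sqrt M * R) * (max 1 (5 / ε)) ^ (5:ℕ))))
        (meas_G hγc hγ' him hD z₀)
      filter_upwards [ae_mem_Sset] with p hp
      exact norm_Gfun_le γ γ' D z₀ p (hKd p.1 hp.1) (hM' p.1 hp.1) hδpos (hδle p.1 hp.1) hε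
        (hball z₀ (Metric.mem_ball_self hr)).1 (hball z₀ (Metric.mem_ball_self hr)).2
    apply hasFDerivAt_integral_of_dominated_of_fderiv_le (hs := Metric.ball_mem_nhds z₀ hr)
      (bound := fun p : ℝ × EuclideanSpace ℝ (Fin 3) =>
        (Kd * ((2 * Real.sqrt δ)⁻¹ * Real.exp (2 * Real.sqrt M * R) * (4 + Real.sqrt M) *
          (max 1 (5 / ε)) ^ (5:ℕ))) * (1 + ‖p.2‖) ^ (-(4:ℝ)))
    · exact Filter.Eventually.of_forall fun z => meas_G hγc hγ' him hD z
    · exact hIz₀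
    · exact meas_G' hγc hγ' him hD z₀
    · filter_upwards [ae_mem_Sset] with p hp
      intro z hz
      exact norm_G'fun_le γ γ' D z p (hKd p.1 hp.1) (hM' p.1 hp.1) hδpos (hδle p.1 hp.1) hε
        (hball z hz).1 (hball z hz).2
    · exact integrable_bound_Pmeas _
    · exact Filter.Eventually.of_forall fun p => fun z _ => hasFDerivAt_G γ γ' D z p

/-- Let `γ : [0,1] → ℂ` be continuously differentiable with image disjoint
from `(−∞,0]` and let `D : ℂ → ℂ` be continuous. Then for every `z` in the forward tube the
integral defining `W_{γ(t)}(z)` converges absolutely for each `t ∈ [0,1]`, the contour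
integrand `t ↦ D(γ(t)) γ′(t) W_{γ(t)}(z)` is integrable on `[0,1]`, and
`F(z) = ∫₀¹ D(γ(t)) γ′(t) W_{γ(t)}(z) dt` is holomorphic at every point of the tube. -/
theorem contour_smeared_wightman_holomorphic (γ γ' : ℝ → ℂ)
    (hγ : ∀ t ∈ Set.Icc (0 : ℝ) 1, HasDerivAt γ (γ' t) t)
    (hγ' : ContinuousOn γ' (Set.Icc (0 : ℝ) 1))
    (him : ∀ t ∈ Set.Icc (0 : ℝ) 1, ∀ x : ℝ, x ≤ 0 → γ t ≠ (x : ℂ))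
    (D : ℂ → ℂ) (hD : Continuous D) :
    (∀ z ∈ ForwardTube, ∀ t ∈ Set.Icc (0 : ℝ) 1, Integrable (WIntegrand (γ t) z)) ∧
    (∀ z ∈ ForwardTube,
      IntegrableOn (fun t : ℝ => D (γ t) * γ' t * Wpole (γ t) z) (Set.Icc (0 : ℝ) 1)) ∧
    (∀ z ∈ ForwardTube,
      DifferentiableAt ℂ
        (fun z : Fin 4 → ℂ => ∫ t in Set.Icc (0 : ℝ) 1, D (γ t) * γ' t * Wpole (γ t) z) z) := by
  have hγc : ContinuousOn γ (Set.Icc (0:ℝ) 1) := fun t ht =>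
    (hγ t ht).continuousAt.continuousWithinAt
  set c : ℂ := ((2 * Real.pi : ℝ) : ℂ)⁻¹ ^ 3 with hc
  -- key identity: on the ball where `Gfun` is integrable, the contour integral of `Wpole`
  -- equals `c` times the product integral
  have key : ∀ z : Fin 4 → ℂ, Integrable (Gfun γ γ' D z) Pmeas →
      (∫ t in Set.Icc (0:ℝ) 1, D (γ t) * γ' t * Wpole (γ t) z)
        = c * ∫ p, Gfun γ γ' D z p ∂Pmeas := by
    intro z hz
    rw [show (∫ p, Gfun γ γ' D z p ∂Pmeas)
        = ∫ t in Set.Icc (0:ℝ) 1, ∫ k, Gfun γ γ' D z (t, k) ∂volume from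
      MeasureTheory.integral_prod _ hz]
    rw [← MeasureTheory.integral_const_mul]
    apply setIntegral_congr_fun measurableSet_Icc
    intro t _
    simp only [Gfun, Wpole]
    rw [MeasureTheory.integral_const_mul]
    ring
  refine ⟨fun z hz t ht => integrable_WIntegrand (him t ht) hz, ?_, ?_⟩
  · intro z hz
    obtain ⟨r, hr, hInt, _⟩ := main_lemma γ γ' D hγc hγ' him hD hz
    have hG := hInt z (Metric.mem_ball_self hr)
    have h1 : Integrable (fun t => ∫ k, Gfun γ γ' D z (t, k) ∂volume)
        (volume.restrict (Set.Icc (0:ℝ) 1)) := hG.integral_prod_left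
    have h2 := h1.const_mul c
    rw [IntegrableOn]
    apply h2.congr
    filter_upwards [ae_restrict_mem measurableSet_Icc] with t _
    simp only [Gfun, Wpole]
    rw [MeasureTheory.integral_const_mul]
    ring
  · intro z hz
    obtain ⟨r, hr, hInt, hF⟩ := main_lemma γ γ' D hγc hγ' him hD hz
    have hdiff : DifferentiableAt ℂ (fun z => c * ∫ p, Gfun γ γ' D z p ∂Pmeas) z :=
      (hF.differentiableAt).const_mul c
    apply hdiff.congr_of_eventuallyEq
    filter_upwards [Metric.ball_mem_nhds z hr] with w hw
    exact key w (hInt w hw)
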